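/- Let X be a stationary, irreducible, aperiodic Markov chain on a finite state space 𝒳 with transition matrix P, let g : 𝒳 → 𝒴 and Y_t = g(X_t). For a sequence y_1^T ∈ 𝒴^T define the set of realizable preimages R(y_1^T) = { x_1^T ∈ 𝒳^T : p_{X_1^T}(x_1^T) > 0 and g(x_t) = y_t for all t ∈ [T] }. Then the conditional entropy rate lim_{T→∞} (1/T) H(X_1^T | Y_1^T) equals 0 if and only if there exists a constant C < ∞ such that for every T, |R(Y_1^T)| ≤ C almost surely. -/

import Mathlib

set_option linter.unusedSectionVars false
set_option linter.unusedVariables false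
set_option maxHeartbeats 1000000


open Classical

/-- Finite-dimensional distributions of the Markov chain with initial distribution `μ`
and transition matrix `P`. -/
noncomputable def markovFD {α : Type*} [Fintype α] (μ : α → ℝ) (P : α → α → ℝ)
    (T : ℕ) (x : Fin T → α) : ℝ :=
  ∏ i : Fin T,
    if (i : ℕ) = 0 then μ (x i)
    else P (x ⟨(i : ℕ) - 1, lt_of_le_of_lt (Nat.sub_le _ _) i.isLt⟩) (x i)

/-- Irreducibility of a transition matrix. -/
def MCIrreducible {α : Type*} [Fintype α] [DecidableEq α] (P : Matrix α α ℝ) : Prop :=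
  ∀ i j, ∃ n : ℕ, 0 < n ∧ 0 < (P ^ n) i j

/-- Aperiodicity of a transition matrix. -/
def MCAperiodic {α : Type*} [Fintype α] [DecidableEq α] (P : Matrix α α ℝ) : Prop :=
  ∀ i, ∃ N : ℕ, ∀ n, N ≤ n → 0 < (P ^ n) i i

/-- Shannon conditional entropy `H(A | B)` of a joint PMF `J` on `A × B`. -/
noncomputable def condEnt2 {A B : Type*} [Fintype A] [Fintype B] (J : A → B → ℝ) : ℝ :=
  -∑ a, ∑ b, J a b * Real.log (J a b / (∑ a', J a' b))

/-- Joint PMF of `(X_1^T, Y_1^T)` with `Y_t = g(X_t)`. -/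
noncomputable def coarseJointMC {α γ : Type*} [Fintype α] [Fintype γ]
    (π : α → ℝ) (P : α → α → ℝ) (g : α → γ) (T : ℕ) :
    (Fin T → α) → (Fin T → γ) → ℝ :=
  fun x y => if ∀ i, y i = g (x i) then markovFD π P T x else 0

section aux
variable {α : Type*} [Fintype α] [DecidableEq α] (π : α → ℝ) (P : α → α → ℝ)

noncomputable def transProd (k : ℕ) (w : Fin (k+1) → α) : ℝ :=
  ∏ i : Fin k, P (w i.castSucc) (w i.succ)

lemma markovFD_succ (k : ℕ) (x : Fin (k+1) → α) :
    markovFD π P (k+1) x = π (x 0) * transProd P k x := by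
  rw [markovFD, transProd, Fin.prod_univ_succ]
  congr 1

lemma markovFD_nonneg (hπ0 : ∀ i, 0 ≤ π i) (hP0 : ∀ i j, 0 ≤ P i j) (T : ℕ)
    (x : Fin T → α) : 0 ≤ markovFD π P T x := by
  refine Finset.prod_nonneg fun i _ => ?_
  split <;> [exact hπ0 _; exact hP0 _ _]

lemma transProd_nonneg (hP0 : ∀ i j, 0 ≤ P i j) (k : ℕ) (w : Fin (k+1) → α) :
    0 ≤ transProd P k w :=
  Finset.prod_nonneg fun i _ => hP0 _ _

lemma transProd_cons (k : ℕ) (a : α) (x : Fin (k+1) → α) :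
    transProd P (k+1) (Fin.cons a x) = P a (x 0) * transProd P k x := by
  rw [transProd, transProd, Fin.prod_univ_succ]
  congr 1

lemma transProd_snoc (k : ℕ) (x : Fin (k+1) → α) (a : α) :
    transProd P (k+1) (Fin.snoc x a) = transProd P k x * P (x (Fin.last k)) a := by
  rw [transProd, transProd, Fin.prod_univ_castSucc]
  congr 1
  · refine Finset.prod_congr rfl fun i _ => ?_
    congr 1
    · exact Fin.snoc_castSucc _ _ _
    · rw [show (i.castSucc).succ = (i.succ).castSucc by ext; simp, Fin.snoc_castSucc]
  · congr 1
    · exact Fin.snoc_castSucc _ _ _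
    · rw [show (Fin.last k).succ = Fin.last (k+1) by ext; simp, Fin.snoc_last]

lemma sum_pi_cons {N : ℕ} (G : (Fin (N+1) → α) → ℝ) :
    ∑ y : Fin (N+1) → α, G y = ∑ a : α, ∑ x : Fin N → α, G (Fin.cons a x) := by
  rw [← Equiv.sum_comp (Fin.consEquiv fun _ => α) G, Fintype.sum_prod_type]
  rfl

lemma sum_pi_snoc {N : ℕ} (G : (Fin (N+1) → α) → ℝ) :
    ∑ y : Fin (N+1) → α, G y = ∑ x : Fin N → α, ∑ a : α, G (Fin.snoc x a) := by
  rw [← Equiv.sum_comp (Fin.snocEquiv fun _ => α) G, Fintype.sum_prod_type]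
  rw [Finset.sum_comm]
  rfl

end aux
section more
variable {α : Type*} [Fintype α] [DecidableEq α] (π : α → ℝ) (P : α → α → ℝ)

lemma markovFD_snoc (k : ℕ) (x : Fin (k+1) → α) (a : α) :
    markovFD π P (k+2) (Fin.snoc x a) = markovFD π P (k+1) x * P (x (Fin.last k)) a := by
  rw [markovFD_succ, markovFD_succ, transProd_snoc]
  rw [show (Fin.snoc x a : Fin (k+2) → α) 0 = x 0 by
    rw [show (0 : Fin (k+2)) = (0 : Fin (k+1)).castSucc by ext; simp, Fin.snoc_castSucc]]
  ring

lemma sum_markovFD_snoc (hP1 : ∀ i, ∑ j, P i j = 1) (k : ℕ) (x : Fin (k+1) → α) :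
    ∑ a : α, markovFD π P (k+2) (Fin.snoc x a) = markovFD π P (k+1) x := by
  simp only [markovFD_snoc]
  rw [← Finset.mul_sum, hP1, mul_one]

lemma markovFD_cons (k : ℕ) (a : α) (x : Fin (k+1) → α) :
    markovFD π P (k+2) (Fin.cons a x) = π a * (P a (x 0) * transProd P k x) := by
  rw [markovFD_succ, transProd_cons]
  congr 1

lemma sum_markovFD_cons (hinv : ∀ j, ∑ i, π i * P i j = π j) (k : ℕ) (x : Fin (k+1) → α) :
    ∑ a : α, markovFD π P (k+2) (Fin.cons a x) = markovFD π P (k+1) x := by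
  simp only [markovFD_cons, ← mul_assoc]
  rw [← Finset.sum_mul, hinv, markovFD_succ]

lemma markovFD_total (hπ1 : ∑ i, π i = 1) (hP1 : ∀ i, ∑ j, P i j = 1) (T : ℕ) :
    ∑ x : Fin T → α, markovFD π P T x = 1 := by
  induction T with
  | zero => simp [markovFD]
  | succ k ih =>
    cases k with
    | zero =>
      rw [sum_pi_cons (fun y => markovFD π P 1 y)]
      simp [markovFD_succ, transProd, hπ1]
    | succ k' =>
      rw [sum_pi_snoc (fun y => markovFD π P (k'+2) y)]
      rw [← ih]
      exact Finset.sum_congr rfl fun x _ => sum_markovFD_snoc π P hP1 k' x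

lemma markovFD_cast {n n' : ℕ} (h : n = n') (x : Fin n' → α) :
    markovFD π P n (fun i => x (Fin.cast h i)) = markovFD π P n' x := by
  subst h; rfl

lemma sum_cast {n n' : ℕ} (h : n = n') (F : (Fin n' → α) → ℝ) :
    ∑ x : Fin n' → α, F x = ∑ x : Fin n → α, F (fun i => x (Fin.cast h.symm i)) := by
  subst h; rfl

end more
section marg
variable {α : Type*} [Fintype α] [DecidableEq α] (π : α → ℝ) (P : α → α → ℝ)

lemma sum_ite_const' {c : Prop} [Decidable c] (f : α → ℝ) :
    (∑ a : α, if c then f a else 0) = if c then ∑ a : α, f a else 0 := by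
  split_ifs with h <;> simp

lemma sum_markovFD_snoc' (hP1 : ∀ i, ∑ j, P i j = 1) (N : ℕ) (hN : 1 ≤ N) (x : Fin N → α) :
    ∑ a : α, markovFD π P (N+1) (Fin.snoc x a) = markovFD π P N x := by
  obtain ⟨k, rfl⟩ : ∃ k, N = k + 1 := ⟨N - 1, by omega⟩
  exact sum_markovFD_snoc π P hP1 k x

lemma sum_markovFD_cons' (hinv : ∀ j, ∑ i, π i * P i j = π j) (N : ℕ) (hN : 1 ≤ N)
    (x : Fin N → α) :
    ∑ a : α, markovFD π P (N+1) (Fin.cons a x) = markovFD π P N x := by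
  obtain ⟨k, rfl⟩ : ∃ k, N = k + 1 := ⟨N - 1, by omega⟩
  exact sum_markovFD_cons π P hinv k x

lemma marg0 (hinv : ∀ j, ∑ i, π i * P i j = π j) (ℓ : ℕ) :
    ∀ (s : ℕ) (w : Fin (ℓ+1) → α),
      (∑ x : Fin (ℓ+1+s) → α,
        if ∀ t : Fin (ℓ+1), x ⟨s + t.1, by have := t.isLt; omega⟩ = w t
        then markovFD π P (ℓ+1+s) x else 0) = markovFD π P (ℓ+1) w := by
  intro s
  induction s with
  | zero =>
    intro w
    have hcond : ∀ x : Fin (ℓ+1+0) → α,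
        (∀ t : Fin (ℓ+1), x ⟨0 + t.1, by have := t.isLt; omega⟩ = w t) ↔ x = w := by
      intro x
      constructor
      · intro h
        funext t
        have h2 := h t
        have ht : (⟨0 + t.1, by have := t.isLt; omega⟩ : Fin (ℓ+1+0)) = t := by
          apply Fin.ext; simp
        rw [ht] at h2
        exact h2
      · intro h t
        have ht : (⟨0 + t.1, by have := t.isLt; omega⟩ : Fin (ℓ+1+0))
            = ⟨t.1, by have := t.isLt; omega⟩ := by
          apply Fin.ext; simp
        rw [h, ht]
    calc (∑ x : Fin (ℓ+1+0) → α,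
            if ∀ t : Fin (ℓ+1), x ⟨0 + t.1, by have := t.isLt; omega⟩ = w t
            then markovFD π P (ℓ+1+0) x else 0)
        = ∑ x : Fin (ℓ+1+0) → α, if x = w then markovFD π P (ℓ+1+0) x else 0 :=
          Finset.sum_congr rfl fun x _ => if_congr (hcond x) rfl rfl
      _ = markovFD π P (ℓ+1) w := by
          rw [Finset.sum_ite_eq' Finset.univ w (fun x => markovFD π P (ℓ+1+0) x)]
          simp
  | succ s ih =>
    intro w
    show (∑ x : Fin (ℓ+1+s+1) → α,
        if ∀ t : Fin (ℓ+1), x ⟨s + 1 + t.1, by have := t.isLt; omega⟩ = w t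
        then markovFD π P (ℓ+1+s+1) x else 0) = markovFD π P (ℓ+1) w
    rw [sum_pi_cons (fun x : Fin (ℓ+1+s+1) → α =>
      if ∀ t : Fin (ℓ+1), x ⟨s + 1 + t.1, by have := t.isLt; omega⟩ = w t
      then markovFD π P (ℓ+1+s+1) x else 0)]
    have key : ∀ (a : α) (x' : Fin (ℓ+1+s) → α),
        (∀ t : Fin (ℓ+1),
            (Fin.cons a x' : Fin (ℓ+1+s+1) → α) ⟨s + 1 + t.1, by have := t.isLt; omega⟩ = w t)
          ↔ (∀ t : Fin (ℓ+1), x' ⟨s + t.1, by have := t.isLt; omega⟩ = w t) := by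
      intro a x'
      have hpt : ∀ t : Fin (ℓ+1),
          (Fin.cons a x' : Fin (ℓ+1+s+1) → α) ⟨s + 1 + t.1, by have := t.isLt; omega⟩
            = x' ⟨s + t.1, by have := t.isLt; omega⟩ := by
        intro t
        have h3 : (⟨s + 1 + t.1, by have := t.isLt; omega⟩ : Fin (ℓ+1+s+1))
            = Fin.succ ⟨s + t.1, by have := t.isLt; omega⟩ := by
          apply Fin.ext; simp [Fin.val_succ]; omega
        rw [h3, Fin.cons_succ]
      exact ⟨fun h t => (hpt t).symm.trans (h t), fun h t => (hpt t).trans (h t)⟩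
    calc (∑ a : α, ∑ x' : Fin (ℓ+1+s) → α,
            if ∀ t : Fin (ℓ+1),
                (Fin.cons a x' : Fin (ℓ+1+s+1) → α) ⟨s + 1 + t.1, by have := t.isLt; omega⟩ = w t
            then markovFD π P (ℓ+1+s+1) (Fin.cons a x') else 0)
        = ∑ x' : Fin (ℓ+1+s) → α, ∑ a : α,
            if ∀ t : Fin (ℓ+1), x' ⟨s + t.1, by have := t.isLt; omega⟩ = w t
            then markovFD π P (ℓ+1+s+1) (Fin.cons a x') else 0 := by
          rw [Finset.sum_comm]
          exact Finset.sum_congr rfl fun x' _ => Finset.sum_congr rfl fun a _ =>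
            if_congr (key a x') rfl rfl
      _ = ∑ x' : Fin (ℓ+1+s) → α,
            if ∀ t : Fin (ℓ+1), x' ⟨s + t.1, by have := t.isLt; omega⟩ = w t
            then markovFD π P (ℓ+1+s) x' else 0 := by
          refine Finset.sum_congr rfl fun x' _ => ?_
          rw [sum_ite_const', sum_markovFD_cons' π P hinv (ℓ+1+s) (by omega) x']
      _ = markovFD π P (ℓ+1) w := ih w

lemma marg (hP1 : ∀ i, ∑ j, P i j = 1) (hinv : ∀ j, ∑ i, π i * P i j = π j) (ℓ : ℕ) :
    ∀ (r s : ℕ) (w : Fin (ℓ+1) → α),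
      (∑ x : Fin (ℓ+1+s+r) → α,
        if ∀ t : Fin (ℓ+1), x ⟨s + t.1, by have := t.isLt; omega⟩ = w t
        then markovFD π P (ℓ+1+s+r) x else 0) = markovFD π P (ℓ+1) w := by
  intro r
  induction r with
  | zero => exact marg0 π P hinv ℓ
  | succ r ih =>
    intro s w
    show (∑ x : Fin (ℓ+1+s+r+1) → α,
        if ∀ t : Fin (ℓ+1), x ⟨s + t.1, by have := t.isLt; omega⟩ = w t
        then markovFD π P (ℓ+1+s+r+1) x else 0) = markovFD π P (ℓ+1) w
    rw [sum_pi_snoc (fun x : Fin (ℓ+1+s+r+1) → α =>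
      if ∀ t : Fin (ℓ+1), x ⟨s + t.1, by have := t.isLt; omega⟩ = w t
      then markovFD π P (ℓ+1+s+r+1) x else 0)]
    have key : ∀ (x' : Fin (ℓ+1+s+r) → α) (a : α),
        (∀ t : Fin (ℓ+1),
            (Fin.snoc x' a : Fin (ℓ+1+s+r+1) → α) ⟨s + t.1, by have := t.isLt; omega⟩ = w t)
          ↔ (∀ t : Fin (ℓ+1), x' ⟨s + t.1, by have := t.isLt; omega⟩ = w t) := by
      intro x' a
      have hpt : ∀ t : Fin (ℓ+1),
          (Fin.snoc x' a : Fin (ℓ+1+s+r+1) → α) ⟨s + t.1, by have := t.isLt; omega⟩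
            = x' ⟨s + t.1, by have := t.isLt; omega⟩ := by
        intro t
        have h3 : (⟨s + t.1, by have := t.isLt; omega⟩ : Fin (ℓ+1+s+r+1))
            = Fin.castSucc ⟨s + t.1, by have := t.isLt; omega⟩ := by
          apply Fin.ext; simp
        rw [h3, Fin.snoc_castSucc]
      exact ⟨fun h t => (hpt t).symm.trans (h t), fun h t => (hpt t).trans (h t)⟩
    calc (∑ x' : Fin (ℓ+1+s+r) → α, ∑ a : α,
            if ∀ t : Fin (ℓ+1),
                (Fin.snoc x' a : Fin (ℓ+1+s+r+1) → α) ⟨s + t.1, by have := t.isLt; omega⟩ = w t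
            then markovFD π P (ℓ+1+s+r+1) (Fin.snoc x' a) else 0)
        = ∑ x' : Fin (ℓ+1+s+r) → α,
            if ∀ t : Fin (ℓ+1), x' ⟨s + t.1, by have := t.isLt; omega⟩ = w t
            then markovFD π P (ℓ+1+s+r) x' else 0 := by
          refine Finset.sum_congr rfl fun x' _ => ?_
          rw [show (∑ a : α,
              if ∀ t : Fin (ℓ+1),
                  (Fin.snoc x' a : Fin (ℓ+1+s+r+1) → α) ⟨s + t.1, by have := t.isLt; omega⟩ = w t
              then markovFD π P (ℓ+1+s+r+1) (Fin.snoc x' a) else 0)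
            = ∑ a : α,
              if ∀ t : Fin (ℓ+1), x' ⟨s + t.1, by have := t.isLt; omega⟩ = w t
              then markovFD π P (ℓ+1+s+r+1) (Fin.snoc x' a) else 0 from
            Finset.sum_congr rfl fun a _ => if_congr (key x' a) rfl rfl]
          rw [sum_ite_const', sum_markovFD_snoc' π P hP1 (ℓ+1+s+r) (by omega) x']
      _ = markovFD π P (ℓ+1) w := ih s w

end marg
section gadget
variable {α : Type*} [Fintype α] [DecidableEq α] {γ : Type*} [Fintype γ]

lemma blt {ℓ m j t : ℕ} (hj : j < m) (ht : t < ℓ+1) : (ℓ+1)*j + t < m*(ℓ+1) :=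
  calc (ℓ+1)*j + t < (ℓ+1)*j + (ℓ+1) := Nat.add_lt_add_left ht _
    _ = (ℓ+1)*(j+1) := by ring
    _ ≤ (ℓ+1)*m := Nat.mul_le_mul_left _ hj
    _ = m*(ℓ+1) := Nat.mul_comm _ _

def win {ℓ m : ℕ} (j : Fin m) (x : Fin (m*(ℓ+1)) → α) : Fin (ℓ+1) → α :=
  fun t => x ⟨(ℓ+1)*j.1 + t.1, blt j.isLt t.isLt⟩

def blk {ℓ m : ℕ} (p : Fin (m*(ℓ+1))) : Fin m :=
  ⟨p.1 / (ℓ+1), (Nat.div_lt_iff_lt_mul (Nat.succ_pos ℓ)).2 p.isLt⟩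

def off {ℓ m : ℕ} (p : Fin (m*(ℓ+1))) : Fin (ℓ+1) :=
  ⟨p.1 % (ℓ+1), Nat.mod_lt _ (Nat.succ_pos ℓ)⟩

lemma blk_mk {ℓ m : ℕ} (j : Fin m) (t : Fin (ℓ+1)) :
    blk ⟨(ℓ+1)*j.1 + t.1, blt j.isLt t.isLt⟩ = j := by
  apply Fin.ext
  show ((ℓ+1)*j.1 + t.1) / (ℓ+1) = j.1
  rw [Nat.mul_add_div (Nat.succ_pos ℓ), Nat.div_eq_of_lt t.isLt]
  omega

lemma off_mk {ℓ m : ℕ} (j : Fin m) (t : Fin (ℓ+1)) :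
    off ⟨(ℓ+1)*j.1 + t.1, blt j.isLt t.isLt⟩ = t := by
  apply Fin.ext
  show ((ℓ+1)*j.1 + t.1) % (ℓ+1) = t.1
  rw [Nat.mul_add_mod, Nat.mod_eq_of_lt t.isLt]

lemma blk_off {ℓ m : ℕ} (p : Fin (m*(ℓ+1))) : (ℓ+1) * (blk p).1 + (off p).1 = p.1 :=
  Nat.div_add_mod p.1 (ℓ+1)

lemma x_eq_win {ℓ m : ℕ} (x : Fin (m*(ℓ+1)) → α) (p : Fin (m*(ℓ+1))) :
    win (blk p) x (off p) = x p :=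
  congrArg x (Fin.ext (blk_off p))

noncomputable def flipw {ℓ : ℕ} (u v : Fin (ℓ+1) → α) (w : Fin (ℓ+1) → α) : Fin (ℓ+1) → α :=
  if w = u then v else if w = v then u else w

noncomputable def Sw {ℓ m : ℕ} (u v : Fin (ℓ+1) → α) (S : Finset (Fin m))
    (x : Fin (m*(ℓ+1)) → α) : Fin (m*(ℓ+1)) → α :=
  fun p => if blk p ∈ S then flipw u v (win (blk p) x) (off p) else x p

lemma win_Sw {ℓ m : ℕ} (u v : Fin (ℓ+1) → α) (S : Finset (Fin m)) (x : Fin (m*(ℓ+1)) → α)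
    (j : Fin m) :
    win j (Sw u v S x) = if j ∈ S then flipw u v (win j x) else win j x := by
  funext t
  show Sw u v S x ⟨(ℓ+1)*j.1 + t.1, blt j.isLt t.isLt⟩ = _
  rw [Sw]
  rw [blk_mk, off_mk]
  split_ifs with h
  · rfl
  · rfl

lemma flipw_boundary {ℓ : ℕ} {u v : Fin (ℓ+1) → α} (h00 : u 0 = v 0)
    (hll : u (Fin.last ℓ) = v (Fin.last ℓ)) (w : Fin (ℓ+1) → α) (t : Fin (ℓ+1))
    (ht : t = 0 ∨ t = Fin.last ℓ) : flipw u v w t = w t := by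
  rw [flipw]
  split_ifs with h1 h2
  · subst h1; rcases ht with h | h <;> rw [h]
    · exact h00.symm
    · exact hll.symm
  · subst h2; rcases ht with h | h <;> rw [h]
    · exact h00
    · exact hll
  · rfl

lemma off_boundary {ℓ m : ℕ} (p : Fin (m*(ℓ+1))) (h : (off p : Fin (ℓ+1)).1 = 0 ∨ (off p).1 = ℓ) :
    (off p : Fin (ℓ+1)) = 0 ∨ off p = Fin.last ℓ := by
  rcases h with h | h
  · exact Or.inl (Fin.ext h)
  · exact Or.inr (Fin.ext h)

lemma Sw_eq_outside {ℓ m : ℕ} {u v : Fin (ℓ+1) → α} (h00 : u 0 = v 0)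
    (hll : u (Fin.last ℓ) = v (Fin.last ℓ)) (S : Finset (Fin m)) (x : Fin (m*(ℓ+1)) → α)
    (p : Fin (m*(ℓ+1))) (h : (off p : Fin (ℓ+1)).1 = 0 ∨ (off p).1 = ℓ) :
    Sw u v S x p = x p := by
  rw [Sw]
  split_ifs with hmem
  · rw [flipw_boundary h00 hll _ _ (off_boundary p h), x_eq_win]
  · rfl

noncomputable def mf (π : α → ℝ) (P : α → α → ℝ) {n : ℕ} (x : Fin n → α) (i : Fin n) : ℝ :=
  if (i : ℕ) = 0 then π (x i)
  else P (x ⟨(i : ℕ) - 1, lt_of_le_of_lt (Nat.sub_le _ _) i.isLt⟩) (x i)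

lemma markovFD_eq_prod_mf (π : α → ℝ) (P : α → α → ℝ) {n : ℕ} (x : Fin n → α) :
    markovFD π P n x = ∏ i, mf π P x i := rfl

lemma mf_nonneg (π : α → ℝ) (P : α → α → ℝ) (hπ0 : ∀ i, 0 ≤ π i) (hP0 : ∀ i j, 0 ≤ P i j)
    {n : ℕ} (x : Fin n → α) (i : Fin n) : 0 ≤ mf π P x i := by
  rw [mf]; split <;> [exact hπ0 _; exact hP0 _ _]

def emb {ℓ m : ℕ} (j : Fin m) (t : Fin ℓ) : Fin (m*(ℓ+1)) :=
  ⟨(ℓ+1)*j.1 + (t.1+1), blt j.isLt (by have := t.isLt; omega)⟩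

lemma emb_inj {ℓ m : ℕ} (j : Fin m) : Function.Injective (emb (ℓ := ℓ) j) := by
  intro t t' h
  apply Fin.ext
  have := congrArg Fin.val h
  simp only [emb] at this
  omega

def Ij {ℓ m : ℕ} (j : Fin m) : Finset (Fin (m*(ℓ+1))) := Finset.image (emb j) Finset.univ

lemma mem_Ij {ℓ m : ℕ} (j : Fin m) (i : Fin (m*(ℓ+1))) :
    i ∈ Ij j ↔ (blk i = j ∧ 1 ≤ (off i : Fin (ℓ+1)).1) := by
  rw [Ij, Finset.mem_image]
  constructor
  · rintro ⟨t, -, rfl⟩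
    have ht1 : t.1 + 1 < ℓ + 1 := by have := t.isLt; omega
    constructor
    · exact blk_mk j ⟨t.1+1, ht1⟩
    · have h2 : (off (emb j t) : Fin (ℓ+1)) = ⟨t.1+1, ht1⟩ := off_mk j ⟨t.1+1, ht1⟩
      rw [h2]
      show 1 ≤ t.1+1
      omega
  · rintro ⟨hb, ho⟩
    have hol := (off i (m := m)).isLt
    refine ⟨⟨(off i (m := m)).1 - 1, by omega⟩, Finset.mem_univ _, ?_⟩
    apply Fin.ext
    show (ℓ+1)*j.1 + ((off i (m := m)).1 - 1 + 1) = i.1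
    have hbo := blk_off i
    rw [hb] at hbo
    omega

lemma prod_Ij (π : α → ℝ) (P : α → α → ℝ) {ℓ m : ℕ} (x : Fin (m*(ℓ+1)) → α) (j : Fin m) :
    ∏ i ∈ Ij j, mf π P x i = transProd P ℓ (win j x) := by
  rw [Ij, Finset.prod_image (fun a _ b _ h => emb_inj j h), transProd]
  refine Finset.prod_congr rfl fun t _ => ?_
  have hne : ((emb j t : Fin (m*(ℓ+1))) : ℕ) ≠ 0 := by
    show (ℓ+1)*j.1 + (t.1+1) ≠ 0
    omega
  rw [mf, if_neg hne]
  rfl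

lemma markovFD_split (π : α → ℝ) (P : α → α → ℝ) {ℓ m : ℕ} (x : Fin (m*(ℓ+1)) → α) (j : Fin m) :
    markovFD π P (m*(ℓ+1)) x = (∏ i ∈ (Ij j)ᶜ, mf π P x i) * transProd P ℓ (win j x) := by
  rw [markovFD_eq_prod_mf, ← prod_Ij π P x j, ← Finset.prod_mul_prod_compl (Ij j) (mf π P x),
    mul_comm]

variable {ℓ m : ℕ} (π : α → ℝ) (P : α → α → ℝ) (u v : Fin (ℓ+1) → α)

lemma mf_outside (h00 : u 0 = v 0) (hll : u (Fin.last ℓ) = v (Fin.last ℓ))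
    (j : Fin m) (x : Fin (m*(ℓ+1)) → α) (i : Fin (m*(ℓ+1))) (hi : i ∉ Ij j) :
    mf π P (Sw u v {j} x) i = mf π P x i := by
  have hA : Sw u v {j} x i = x i := by
    by_cases hb : blk i = j
    · have ho : (off i : Fin (ℓ+1)).1 = 0 := by
        by_contra ho
        exact hi ((mem_Ij j i).2 ⟨hb, by omega⟩)
      exact Sw_eq_outside h00 hll _ x i (Or.inl ho)
    · exact if_neg (by simp [hb])
  have hB : ∀ (hne : (i : ℕ) ≠ 0),
      Sw u v {j} x ⟨(i : ℕ) - 1, lt_of_le_of_lt (Nat.sub_le _ _) i.isLt⟩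
        = x ⟨(i : ℕ) - 1, lt_of_le_of_lt (Nat.sub_le _ _) i.isLt⟩ := by
    intro hne
    set q : Fin (m*(ℓ+1)) := ⟨(i : ℕ) - 1, lt_of_le_of_lt (Nat.sub_le _ _) i.isLt⟩ with hq
    by_cases hb : blk q = j
    · by_cases ho : (off q : Fin (ℓ+1)).1 = 0 ∨ (off q : Fin (ℓ+1)).1 = ℓ
      · exact Sw_eq_outside h00 hll _ x q ho
      · exfalso
        push_neg at ho
        have hbo := blk_off q
        rw [hb] at hbo
        have holt := (off q (m := m)).isLt
        have hoff1 : (off q : Fin (ℓ+1)).1 + 1 < ℓ + 1 := by omega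
        refine hi ((mem_Ij j i).2 ⟨?_, ?_⟩)
        · have : i = ⟨(ℓ+1)*j.1 + ((⟨(off q : Fin (ℓ+1)).1 + 1, hoff1⟩ : Fin (ℓ+1))).1,
              blt j.isLt hoff1⟩ := by
            apply Fin.ext
            show (i : ℕ) = (ℓ+1)*j.1 + ((off q : Fin (ℓ+1)).1 + 1)
            have hqv : (q : ℕ) = (i : ℕ) - 1 := rfl
            omega
          rw [this, blk_mk]
        · have : (off i : Fin (ℓ+1)) = ⟨(off q : Fin (ℓ+1)).1 + 1, hoff1⟩ := by
            have : i = ⟨(ℓ+1)*j.1 + ((⟨(off q : Fin (ℓ+1)).1 + 1, hoff1⟩ : Fin (ℓ+1))).1,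
                blt j.isLt hoff1⟩ := by
              apply Fin.ext
              show (i : ℕ) = (ℓ+1)*j.1 + ((off q : Fin (ℓ+1)).1 + 1)
              have hqv : (q : ℕ) = (i : ℕ) - 1 := rfl
              omega
            rw [this, off_mk]
          rw [this]
          show 1 ≤ (off q : Fin (ℓ+1)).1 + 1
          omega
    · exact if_neg (by simp [hb])
  rw [mf, mf]
  by_cases hne : (i : ℕ) = 0
  · rw [if_pos hne, if_pos hne, hA]
  · rw [if_neg hne, if_neg hne, hA, hB hne]

lemma Sw_single_eq (h00 : u 0 = v 0) (hll : u (Fin.last ℓ) = v (Fin.last ℓ))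
    (x : Fin (m*(ℓ+1)) → α) (j : Fin m) :
    markovFD π P (m*(ℓ+1)) (Sw u v {j} x) * transProd P ℓ (win j x)
      = markovFD π P (m*(ℓ+1)) x * transProd P ℓ (flipw u v (win j x)) := by
  rw [markovFD_split π P (Sw u v {j} x) j, markovFD_split π P x j]
  rw [win_Sw u v {j} x j, if_pos (Finset.mem_singleton_self j)]
  rw [Finset.prod_congr rfl (fun i hi => mf_outside π P u v h00 hll j x i
    (Finset.mem_compl.1 hi))]
  ring

lemma Sw_single_le (hπ0 : ∀ i, 0 ≤ π i) (hP0 : ∀ i j, 0 ≤ P i j)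
    (h00 : u 0 = v 0) (hll : u (Fin.last ℓ) = v (Fin.last ℓ)) (huv : u ≠ v)
    (hWu : 0 < transProd P ℓ u) (hWv : 0 < transProd P ℓ v)
    (x : Fin (m*(ℓ+1)) → α) (j : Fin m) (hj : win j x = u ∨ win j x = v) :
    min (transProd P ℓ u / transProd P ℓ v) (transProd P ℓ v / transProd P ℓ u)
        * markovFD π P (m*(ℓ+1)) x
      ≤ markovFD π P (m*(ℓ+1)) (Sw u v {j} x) := by
  have hid := Sw_single_eq π P u v h00 hll x j
  have hM0 : 0 ≤ markovFD π P (m*(ℓ+1)) x := markovFD_nonneg π P hπ0 hP0 _ x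
  rcases hj with h | h
  · rw [h] at hid
    rw [show flipw u v u = v by rw [flipw, if_pos rfl]] at hid
    have hM' : markovFD π P (m*(ℓ+1)) (Sw u v {j} x)
        = markovFD π P (m*(ℓ+1)) x * (transProd P ℓ v / transProd P ℓ u) := by
      rw [mul_div_assoc'] at *
      exact (eq_div_iff hWu.ne').2 hid
    rw [hM']
    exact mul_le_mul_of_nonneg_right (min_le_right _ _) hM0 |>.trans_eq (mul_comm _ _)
  · rw [h] at hid
    rw [show flipw u v v = u by rw [flipw, if_neg (Ne.symm huv), if_pos rfl]] at hid
    have hM' : markovFD π P (m*(ℓ+1)) (Sw u v {j} x)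
        = markovFD π P (m*(ℓ+1)) x * (transProd P ℓ u / transProd P ℓ v) := by
      rw [mul_div_assoc'] at *
      exact (eq_div_iff hWv.ne').2 hid
    rw [hM']
    exact mul_le_mul_of_nonneg_right (min_le_left _ _) hM0 |>.trans_eq (mul_comm _ _)

lemma Sw_empty (x : Fin (m*(ℓ+1)) → α) : Sw u v (∅ : Finset (Fin m)) x = x :=
  funext fun p => if_neg (Finset.notMem_empty _)

lemma Sw_insert (j : Fin m) (S : Finset (Fin m)) (hjS : j ∉ S) (x : Fin (m*(ℓ+1)) → α) :
    Sw u v (insert j S) x = Sw u v {j} (Sw u v S x) := by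
  funext p
  by_cases h1 : blk p = j
  · have hnot : blk p ∉ S := by rw [h1]; exact hjS
    calc Sw u v (insert j S) x p = flipw u v (win (blk p) x) (off p) :=
          if_pos (by rw [h1]; exact Finset.mem_insert_self _ _)
      _ = flipw u v (win (blk p) (Sw u v S x)) (off p) := by
          rw [win_Sw u v S x (blk p), if_neg hnot]
      _ = Sw u v {j} (Sw u v S x) p :=
          (if_pos (by rw [h1]; exact Finset.mem_singleton_self _)).symm
  · by_cases h2 : blk p ∈ S
    · calc Sw u v (insert j S) x p = flipw u v (win (blk p) x) (off p) :=
            if_pos (Finset.mem_insert_of_mem h2)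
        _ = Sw u v S x p := (if_pos h2).symm
        _ = Sw u v {j} (Sw u v S x) p := (if_neg (by simp [h1])).symm
    · calc Sw u v (insert j S) x p = x p :=
            if_neg (by simp [Finset.mem_insert, h1, h2])
        _ = Sw u v S x p := (if_neg h2).symm
        _ = Sw u v {j} (Sw u v S x) p := (if_neg (by simp [h1])).symm

noncomputable def Mset (x : Fin (m*(ℓ+1)) → α) : Finset (Fin m) :=
  Finset.univ.filter (fun j => win j x = u ∨ win j x = v)

lemma multi_swap (hπ0 : ∀ i, 0 ≤ π i) (hP0 : ∀ i j, 0 ≤ P i j)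
    (h00 : u 0 = v 0) (hll : u (Fin.last ℓ) = v (Fin.last ℓ)) (huv : u ≠ v)
    (hWu : 0 < transProd P ℓ u) (hWv : 0 < transProd P ℓ v)
    (x : Fin (m*(ℓ+1)) → α) (S : Finset (Fin m)) (hS : S ⊆ Mset u v x) :
    min (transProd P ℓ u / transProd P ℓ v) (transProd P ℓ v / transProd P ℓ u) ^ S.card
        * markovFD π P (m*(ℓ+1)) x
      ≤ markovFD π P (m*(ℓ+1)) (Sw u v S x) := by
  set ρ := min (transProd P ℓ u / transProd P ℓ v) (transProd P ℓ v / transProd P ℓ u) with hρ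
  have hρ0 : 0 < ρ := lt_min (div_pos hWu hWv) (div_pos hWv hWu)
  induction S using Finset.induction_on with
  | empty => rw [Sw_empty]; simp
  | @insert j S hjS ih =>
    have hSM : S ⊆ Mset u v x := fun a ha => hS (Finset.mem_insert_of_mem ha)
    have hjM : j ∈ Mset u v x := hS (Finset.mem_insert_self _ _)
    have hwin : win j (Sw u v S x) = u ∨ win j (Sw u v S x) = v := by
      rw [win_Sw u v S x j, if_neg hjS]
      exact (Finset.mem_filter.1 hjM).2
    rw [Sw_insert u v j S hjS x, Finset.card_insert_of_notMem hjS, pow_succ]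
    calc ρ ^ S.card * ρ * markovFD π P (m*(ℓ+1)) x
        = ρ * (ρ ^ S.card * markovFD π P (m*(ℓ+1)) x) := by ring
      _ ≤ ρ * markovFD π P (m*(ℓ+1)) (Sw u v S x) :=
          mul_le_mul_of_nonneg_left (ih hSM) hρ0.le
      _ ≤ markovFD π P (m*(ℓ+1)) (Sw u v {j} (Sw u v S x)) :=
          Sw_single_le π P u v hπ0 hP0 h00 hll huv hWu hWv (Sw u v S x) j hwin

lemma Sw_inj (huv : u ≠ v) (x : Fin (m*(ℓ+1)) → α) {S S' : Finset (Fin m)}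
    (hS : S ⊆ Mset u v x) (hS' : S' ⊆ Mset u v x) (heq : Sw u v S x = Sw u v S' x) :
    S = S' := by
  have key : ∀ (A B : Finset (Fin m)), A ⊆ Mset u v x → Sw u v A x = Sw u v B x →
      ∀ j, j ∈ A → j ∉ B → False := by
    intro A B hA hAB j hjA hjB
    have h1 : win j (Sw u v A x) = flipw u v (win j x) := by
      rw [win_Sw, if_pos hjA]
    have h2 : win j (Sw u v B x) = win j x := by
      rw [win_Sw, if_neg hjB]
    rw [hAB, h2] at h1
    have hjM := (Finset.mem_filter.1 (hA hjA)).2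
    rcases hjM with h | h
    · rw [h] at h1
      rw [flipw, if_pos rfl] at h1
      exact huv h1
    · rw [h] at h1
      rw [flipw, if_neg (Ne.symm huv), if_pos rfl] at h1
      exact huv h1.symm
  apply Finset.ext
  intro j
  constructor
  · intro hj
    by_contra hj'
    exact key S S' hS heq j hj hj'
  · intro hj
    by_contra hj'
    exact key S' S hS' heq.symm j hj hj'

lemma g_Sw (g : α → γ) (hg : ∀ t, g (u t) = g (v t)) (S : Finset (Fin m))
    (x : Fin (m*(ℓ+1)) → α) (p : Fin (m*(ℓ+1))) : g (Sw u v S x p) = g (x p) := by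
  show g (if blk p ∈ S then flipw u v (win (blk p) x) (off p) else x p) = g (x p)
  split_ifs with h
  · rw [← x_eq_win x p]
    rw [flipw]
    split_ifs with h1 h2
    · rw [h1]; exact (hg _).symm
    · rw [h2]; exact hg _
    · rfl
  · rfl

lemma pY_ge (hπ0 : ∀ i, 0 ≤ π i) (hP0 : ∀ i j, 0 ≤ P i j) (g : α → γ)
    (hg : ∀ t, g (u t) = g (v t))
    (h00 : u 0 = v 0) (hll : u (Fin.last ℓ) = v (Fin.last ℓ)) (huv : u ≠ v)
    (hWu : 0 < transProd P ℓ u) (hWv : 0 < transProd P ℓ v) (x : Fin (m*(ℓ+1)) → α) :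
    markovFD π P (m*(ℓ+1)) x
        * (1 + min (transProd P ℓ u / transProd P ℓ v) (transProd P ℓ v / transProd P ℓ u))
          ^ (Mset u v x).card
      ≤ ∑ x' : Fin (m*(ℓ+1)) → α,
          (if ∀ i, g (x i) = g (x' i) then markovFD π P (m*(ℓ+1)) x' else 0) := by
  set ρ := min (transProd P ℓ u / transProd P ℓ v) (transProd P ℓ v / transProd P ℓ u) with hρ
  have hpow : ∑ S ∈ (Mset u v x).powerset, ρ ^ S.card = (1+ρ) ^ (Mset u v x).card := by
    have h := Finset.prod_add (fun _ : Fin m => ρ) (fun _ => (1:ℝ)) (Mset u v x)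
    simp only [Finset.prod_const, one_pow, mul_one] at h
    rw [add_comm ρ 1] at h
    exact h.symm
  calc markovFD π P (m*(ℓ+1)) x * (1+ρ) ^ (Mset u v x).card
      = ∑ S ∈ (Mset u v x).powerset, ρ ^ S.card * markovFD π P (m*(ℓ+1)) x := by
        rw [← Finset.sum_mul, hpow, mul_comm]
    _ ≤ ∑ S ∈ (Mset u v x).powerset, markovFD π P (m*(ℓ+1)) (Sw u v S x) :=
        Finset.sum_le_sum fun S hS =>
          multi_swap π P u v hπ0 hP0 h00 hll huv hWu hWv x S (Finset.mem_powerset.1 hS)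
    _ = ∑ x' ∈ (Mset u v x).powerset.image (fun S => Sw u v S x),
          markovFD π P (m*(ℓ+1)) x' := by
        rw [Finset.sum_image]
        intro S hS S' hS' h
        exact Sw_inj u v huv x (Finset.mem_powerset.1 hS) (Finset.mem_powerset.1 hS') h
    _ ≤ ∑ x' ∈ Finset.univ.filter (fun x' => ∀ i, g (x i) = g (x' i)),
          markovFD π P (m*(ℓ+1)) x' := by
        refine Finset.sum_le_sum_of_subset_of_nonneg ?_
          (fun i _ _ => markovFD_nonneg π P hπ0 hP0 _ i)
        intro x' hx'
        obtain ⟨S, hS, rfl⟩ := Finset.mem_image.1 hx'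
        exact Finset.mem_filter.2 ⟨Finset.mem_univ _, fun i => (g_Sw u v g hg S x i).symm⟩
    _ = ∑ x' : Fin (m*(ℓ+1)) → α,
          (if ∀ i, g (x i) = g (x' i) then markovFD π P (m*(ℓ+1)) x' else 0) :=
        Finset.sum_filter _ _

lemma win_marg (hP1 : ∀ i, ∑ j, P i j = 1) (hinv : ∀ j, ∑ i, π i * P i j = π j)
    (j : Fin m) (w : Fin (ℓ+1) → α) :
    ∑ x : Fin (m*(ℓ+1)) → α, (if win j x = w then markovFD π P (m*(ℓ+1)) x else 0)
      = markovFD π P (ℓ+1) w := by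
  have hle : ℓ + 1 + (ℓ+1)*j.1 ≤ m*(ℓ+1) := by
    have h2 : (ℓ+1)*(j.1+1) ≤ (ℓ+1)*m := Nat.mul_le_mul_left _ j.isLt
    have h3 : (ℓ+1)*m = m*(ℓ+1) := Nat.mul_comm _ _
    have h4 : (ℓ+1)*(j.1+1) = (ℓ+1)*j.1 + (ℓ+1) := by ring
    omega
  set s := (ℓ+1)*j.1 with hs
  set r := m*(ℓ+1) - (ℓ+1+s) with hr
  have h : ℓ+1+s+r = m*(ℓ+1) := by omega
  rw [sum_cast h (fun x => if win j x = w then markovFD π P (m*(ℓ+1)) x else 0)]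
  have step : ∀ x : Fin (ℓ+1+s+r) → α,
      (if win j (fun i => x (Fin.cast h.symm i)) = w
        then markovFD π P (m*(ℓ+1)) (fun i => x (Fin.cast h.symm i)) else 0)
      = (if ∀ t : Fin (ℓ+1), x ⟨s + t.1, by have := t.isLt; omega⟩ = w t
        then markovFD π P (ℓ+1+s+r) x else 0) := by
    intro x
    refine if_congr ?_ (markovFD_cast π P h.symm x) rfl
    rw [funext_iff]
    constructor
    · intro hc t
      have := hc t
      rw [← this]
      refine congrArg x (Fin.ext ?_)
      show s + t.1 = (ℓ+1)*j.1 + t.1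
      rw [hs]
    · intro hc t
      have := hc t
      rw [← this]
      refine congrArg x (Fin.ext ?_)
      show (ℓ+1)*j.1 + t.1 = s + t.1
      rw [hs]
  rw [Finset.sum_congr rfl (fun x _ => step x)]
  exact marg π P hP1 hinv ℓ r s w

lemma count_sum (hπ0 : ∀ i, 0 ≤ π i) (hP0 : ∀ i j, 0 ≤ P i j)
    (hP1 : ∀ i, ∑ j, P i j = 1) (hinv : ∀ j, ∑ i, π i * P i j = π j) (huv : u ≠ v) :
    ∑ x : Fin (m*(ℓ+1)) → α, markovFD π P (m*(ℓ+1)) x * ((Mset u v x).card : ℝ)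
      = m * (markovFD π P (ℓ+1) u + markovFD π P (ℓ+1) v) := by
  have hcard : ∀ x : Fin (m*(ℓ+1)) → α, ((Mset u v x).card : ℝ)
      = ∑ j : Fin m, (if win j x = u ∨ win j x = v then (1:ℝ) else 0) := by
    intro x
    rw [Mset, Finset.card_filter]
    push_cast
    rfl
  calc ∑ x : Fin (m*(ℓ+1)) → α, markovFD π P (m*(ℓ+1)) x * ((Mset u v x).card : ℝ)
      = ∑ x : Fin (m*(ℓ+1)) → α, ∑ j : Fin m,
          (if win j x = u ∨ win j x = v then markovFD π P (m*(ℓ+1)) x else 0) := by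
        refine Finset.sum_congr rfl fun x _ => ?_
        rw [hcard x, Finset.mul_sum]
        refine Finset.sum_congr rfl fun j _ => ?_
        split_ifs <;> simp
    _ = ∑ j : Fin m, ∑ x : Fin (m*(ℓ+1)) → α,
          (if win j x = u ∨ win j x = v then markovFD π P (m*(ℓ+1)) x else 0) :=
        Finset.sum_comm
    _ = ∑ j : Fin m, (markovFD π P (ℓ+1) u + markovFD π P (ℓ+1) v) := by
        refine Finset.sum_congr rfl fun j _ => ?_
        have hsplit : ∀ x : Fin (m*(ℓ+1)) → α,
            (if win j x = u ∨ win j x = v then markovFD π P (m*(ℓ+1)) x else 0)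
            = (if win j x = u then markovFD π P (m*(ℓ+1)) x else 0)
              + (if win j x = v then markovFD π P (m*(ℓ+1)) x else 0) := by
          intro x
          by_cases h1 : win j x = u
          · rw [if_pos h1, if_pos (Or.inl h1), if_neg (fun hv => huv (h1.symm.trans hv))]
            ring
          · by_cases h2 : win j x = v
            · rw [if_pos (Or.inr h2), if_neg h1, if_pos h2]
              ring
            · rw [if_neg (by tauto), if_neg h1, if_neg h2]
              ring
        rw [Finset.sum_congr rfl (fun x _ => hsplit x), Finset.sum_add_distrib,
          win_marg π P hP1 hinv j u, win_marg π P hP1 hinv j v]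
    _ = m * (markovFD π P (ℓ+1) u + markovFD π P (ℓ+1) v) := by
        rw [Finset.sum_const, Finset.card_univ, Fintype.card_fin, nsmul_eq_mul]

end gadget
section ent
variable {A B : Type*} [Fintype A] [Fintype B]

lemma condEnt2_nonneg (J : A → B → ℝ) (hJ : ∀ a b, 0 ≤ J a b) : 0 ≤ condEnt2 J := by
  rw [condEnt2, neg_nonneg]
  refine Finset.sum_nonpos fun a _ => Finset.sum_nonpos fun b _ => ?_
  rcases eq_or_lt_of_le (hJ a b) with h | h
  · rw [← h, zero_mul]
  · have hle : J a b ≤ ∑ a', J a' b :=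
      Finset.single_le_sum (fun a' _ => hJ a' b) (Finset.mem_univ a)
    have hp : 0 < ∑ a', J a' b := lt_of_lt_of_le h hle
    have hlog : Real.log (J a b / ∑ a', J a' b) ≤ 0 :=
      Real.log_nonpos (div_nonneg h.le hp.le) ((div_le_one hp).2 hle)
    calc J a b * Real.log (J a b / ∑ a', J a' b) ≤ J a b * 0 :=
          mul_le_mul_of_nonneg_left hlog h.le
      _ = 0 := mul_zero _

lemma condEnt2_le_log (J : A → B → ℝ) (hJ : ∀ a b, 0 ≤ J a b)
    (htot : ∑ a, ∑ b, J a b = 1) (C : ℕ)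
    (hcard : ∀ b, (0 < ∑ a, J a b) → (Finset.univ.filter fun a => J a b ≠ 0).card ≤ C) :
    condEnt2 J ≤ Real.log (max C 1 : ℕ) := by
  set K : ℕ := max C 1 with hKdef
  have hK1 : (1:ℝ) ≤ (K:ℝ) := by
    have : 1 ≤ K := le_max_right _ _
    exact_mod_cast this
  have hlogK : 0 ≤ Real.log (K:ℝ) := Real.log_nonneg hK1
  have key : ∀ b, -∑ a, J a b * Real.log (J a b / ∑ a', J a' b)
      ≤ (∑ a', J a' b) * Real.log (K:ℝ) := by
    intro b
    set pb := ∑ a', J a' b with hpb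
    have hpb0 : 0 ≤ pb := Finset.sum_nonneg fun a _ => hJ a b
    rcases eq_or_lt_of_le hpb0 with hz | hpos
    · have hall : ∀ a ∈ Finset.univ, J a b = 0 :=
        (Finset.sum_eq_zero_iff_of_nonneg (fun a _ => hJ a b)).1 hz.symm
      have : ∀ a ∈ Finset.univ, J a b * Real.log (J a b / pb) = 0 := by
        intro a ha; rw [hall a ha, zero_mul]
      rw [Finset.sum_congr rfl this, Finset.sum_const, smul_zero, neg_zero, ← hz, zero_mul]
    · set S := Finset.univ.filter fun a => J a b ≠ 0 with hS
      have hSsum : ∀ f : A → ℝ, (∀ a, J a b = 0 → f a = 0) → ∑ a ∈ S, f a = ∑ a, f a := by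
        intro f hf
        refine Finset.sum_filter_of_ne fun a _ hfa => ?_
        intro hJ0
        exact hfa (hf a hJ0)
      have hpbS : ∑ a ∈ S, J a b = pb := hSsum (fun a => J a b) (fun a h => h)
      set N := S.card with hN
      have hNpos : 0 < N := by
        rcases (Finset.exists_ne_zero_of_sum_ne_zero (by rw [hpbS]; exact hpos.ne' : ∑ a ∈ S, J a b ≠ 0)) with ⟨a, ha, -⟩
        exact Finset.card_pos.2 ⟨a, ha⟩
      have hNC : N ≤ C := hcard b hpos
      have hNK : (N:ℝ) ≤ (K:ℝ) := by
        have : N ≤ K := le_trans hNC (le_max_left _ _)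
        exact_mod_cast this
      have hN1 : (1:ℝ) ≤ (N:ℝ) := by exact_mod_cast hNpos
      have hterm : ∀ a ∈ S, -(J a b * Real.log (J a b / pb))
          ≤ pb/(N:ℝ) - J a b + J a b * Real.log (N:ℝ) := by
        intro a ha
        have hJa : 0 < J a b :=
          lt_of_le_of_ne (hJ a b) (Ne.symm (Finset.mem_filter.1 ha).2)
        have h1 : -(J a b * Real.log (J a b / pb)) = J a b * Real.log (pb / J a b) := by
          rw [Real.log_div hJa.ne' hpos.ne', Real.log_div hpos.ne' hJa.ne']
          ring
        have h2 : Real.log (pb / J a b)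
            = Real.log (pb / (J a b * N)) + Real.log (N:ℝ) := by
          rw [← Real.log_mul (by positivity) (by positivity)]
          congr 1
          field_simp
        have h3 : Real.log (pb / (J a b * N)) ≤ pb / (J a b * N) - 1 :=
          Real.log_le_sub_one_of_pos (by positivity)
        have h4 : J a b * (pb / (J a b * N) - 1) = pb/(N:ℝ) - J a b := by
          field_simp
        calc -(J a b * Real.log (J a b / pb))
            = J a b * Real.log (pb / (J a b * N)) + J a b * Real.log (N:ℝ) := by
              rw [h1, h2]; ring
          _ ≤ J a b * (pb / (J a b * N) - 1) + J a b * Real.log (N:ℝ) := by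
              have := mul_le_mul_of_nonneg_left h3 hJa.le
              linarith
          _ = pb/(N:ℝ) - J a b + J a b * Real.log (N:ℝ) := by rw [h4]
      have hsum1 : -∑ a, J a b * Real.log (J a b / pb)
          = ∑ a ∈ S, -(J a b * Real.log (J a b / pb)) := by
        rw [hSsum (fun a => -(J a b * Real.log (J a b / pb)))
          (fun a h => by simp [h])]
        rw [← Finset.sum_neg_distrib]
      calc -∑ a, J a b * Real.log (J a b / pb)
          = ∑ a ∈ S, -(J a b * Real.log (J a b / pb)) := hsum1
        _ ≤ ∑ a ∈ S, (pb/(N:ℝ) - J a b + J a b * Real.log (N:ℝ)) :=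
            Finset.sum_le_sum hterm
        _ = (N:ℝ) * (pb/(N:ℝ)) - pb + pb * Real.log (N:ℝ) := by
            rw [Finset.sum_add_distrib, Finset.sum_sub_distrib, Finset.sum_const,
              ← Finset.sum_mul, hpbS, nsmul_eq_mul]
        _ = pb * Real.log (N:ℝ) := by
            field_simp
            ring
        _ ≤ pb * Real.log (K:ℝ) := by
            refine mul_le_mul_of_nonneg_left ?_ hpb0
            exact Real.log_le_log (by positivity) hNK
  calc condEnt2 J = ∑ b, -∑ a, J a b * Real.log (J a b / ∑ a', J a' b) := by
        rw [condEnt2, Finset.sum_comm, ← Finset.sum_neg_distrib]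
    _ ≤ ∑ b, (∑ a', J a' b) * Real.log (K:ℝ) := Finset.sum_le_sum fun b _ => key b
    _ = Real.log (K:ℝ) := by
        rw [← Finset.sum_mul, Finset.sum_comm, htot, one_mul]

end ent
section coarse
variable {α : Type*} [Fintype α] [DecidableEq α] {γ : Type*} [Fintype γ]

lemma coarse_eval (π : α → ℝ) (P : α → α → ℝ) (g : α → γ) (T : ℕ) (x : Fin T → α) :
    coarseJointMC π P g T x (fun i => g (x i)) = markovFD π P T x := if_pos (fun i => rfl)

lemma coarse_zero (π : α → ℝ) (P : α → α → ℝ) (g : α → γ) (T : ℕ) (x : Fin T → α)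
    (y : Fin T → γ) (h : y ≠ fun i => g (x i)) : coarseJointMC π P g T x y = 0 :=
  if_neg (fun hc => h (funext hc))

lemma coarse_nonneg (π : α → ℝ) (P : α → α → ℝ) (hπ0 : ∀ i, 0 ≤ π i)
    (hP0 : ∀ i j, 0 ≤ P i j) (g : α → γ) (T : ℕ) (x : Fin T → α) (y : Fin T → γ) :
    0 ≤ coarseJointMC π P g T x y := by
  rw [coarseJointMC]
  split
  · exact markovFD_nonneg π P hπ0 hP0 T x
  · exact le_refl 0

lemma coarse_total (π : α → ℝ) (P : α → α → ℝ) (hπ1 : ∑ i, π i = 1)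
    (hP1 : ∀ i, ∑ j, P i j = 1) (g : α → γ) (T : ℕ) :
    ∑ x : Fin T → α, ∑ y : Fin T → γ, coarseJointMC π P g T x y = 1 := by
  have hx : ∀ x : Fin T → α, ∑ y : Fin T → γ, coarseJointMC π P g T x y
      = markovFD π P T x := by
    intro x
    rw [Finset.sum_eq_single (fun i => g (x i))
      (fun y _ hy => coarse_zero π P g T x y hy) (fun h => absurd (Finset.mem_univ _) h)]
    exact coarse_eval π P g T x
  rw [Finset.sum_congr rfl (fun x _ => hx x)]
  exact markovFD_total π P hπ1 hP1 T

lemma H_lower {ℓ m : ℕ} (π : α → ℝ) (P : α → α → ℝ) (u v : Fin (ℓ+1) → α)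
    (hπ0 : ∀ i, 0 ≤ π i) (hP0 : ∀ i j, 0 ≤ P i j) (g : α → γ)
    (hg : ∀ t, g (u t) = g (v t))
    (h00 : u 0 = v 0) (hll : u (Fin.last ℓ) = v (Fin.last ℓ)) (huv : u ≠ v)
    (hWu : 0 < transProd P ℓ u) (hWv : 0 < transProd P ℓ v)
    (hP1 : ∀ i, ∑ j, P i j = 1) (hinv : ∀ j, ∑ i, π i * P i j = π j) :
    (m:ℝ) * ((markovFD π P (ℓ+1) u + markovFD π P (ℓ+1) v)
        * Real.log (1 + min (transProd P ℓ u / transProd P ℓ v)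
            (transProd P ℓ v / transProd P ℓ u)))
      ≤ condEnt2 (coarseJointMC π P g (m*(ℓ+1))) := by
  set ρ := min (transProd P ℓ u / transProd P ℓ v) (transProd P ℓ v / transProd P ℓ u)
    with hρ
  have hρ0 : 0 < ρ := lt_min (div_pos hWu hWv) (div_pos hWv hWu)
  have hstep : ∀ x : Fin (m*(ℓ+1)) → α,
      markovFD π P (m*(ℓ+1)) x * ((Mset u v x).card : ℝ) * Real.log (1+ρ)
        ≤ -∑ y : Fin (m*(ℓ+1)) → γ, coarseJointMC π P g (m*(ℓ+1)) x y
            * Real.log (coarseJointMC π P g (m*(ℓ+1)) x y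
              / ∑ x' : Fin (m*(ℓ+1)) → α, coarseJointMC π P g (m*(ℓ+1)) x' y) := by
    intro x
    have hin : ∑ y : Fin (m*(ℓ+1)) → γ, coarseJointMC π P g (m*(ℓ+1)) x y
          * Real.log (coarseJointMC π P g (m*(ℓ+1)) x y
            / ∑ x' : Fin (m*(ℓ+1)) → α, coarseJointMC π P g (m*(ℓ+1)) x' y)
        = markovFD π P (m*(ℓ+1)) x * Real.log (markovFD π P (m*(ℓ+1)) x
            / ∑ x' : Fin (m*(ℓ+1)) → α,
                coarseJointMC π P g (m*(ℓ+1)) x' (fun i => g (x i))) := by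
      rw [Finset.sum_eq_single (fun i => g (x i))
        (fun y _ hy => by rw [coarse_zero π P g (m*(ℓ+1)) x y hy, zero_mul])
        (fun h => absurd (Finset.mem_univ _) h)]
      rw [coarse_eval π P g (m*(ℓ+1)) x]
    rw [hin]
    rcases eq_or_lt_of_le (markovFD_nonneg π P hπ0 hP0 (m*(ℓ+1)) x) with hM | hM
    · rw [← hM]
      simp
    · have hpY' : markovFD π P (m*(ℓ+1)) x * (1+ρ) ^ (Mset u v x).card
          ≤ ∑ x' : Fin (m*(ℓ+1)) → α, coarseJointMC π P g (m*(ℓ+1)) x' (fun i => g (x i)) :=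
        pY_ge π P u v hπ0 hP0 g hg h00 hll huv hWu hWv x
      have hpYpos : 0 < ∑ x' : Fin (m*(ℓ+1)) → α,
          coarseJointMC π P g (m*(ℓ+1)) x' (fun i => g (x i)) :=
        lt_of_lt_of_le (by positivity) hpY'
      have h1 : -(markovFD π P (m*(ℓ+1)) x * Real.log (markovFD π P (m*(ℓ+1)) x
            / ∑ x' : Fin (m*(ℓ+1)) → α, coarseJointMC π P g (m*(ℓ+1)) x' (fun i => g (x i))))
          = markovFD π P (m*(ℓ+1)) x * Real.log
              ((∑ x' : Fin (m*(ℓ+1)) → α, coarseJointMC π P g (m*(ℓ+1)) x' (fun i => g (x i)))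
                / markovFD π P (m*(ℓ+1)) x) := by
        rw [Real.log_div hM.ne' hpYpos.ne', Real.log_div hpYpos.ne' hM.ne']
        ring
      rw [h1]
      have h2 : ((1+ρ):ℝ) ^ (Mset u v x).card
          ≤ (∑ x' : Fin (m*(ℓ+1)) → α, coarseJointMC π P g (m*(ℓ+1)) x' (fun i => g (x i)))
            / markovFD π P (m*(ℓ+1)) x :=
        (le_div_iff₀ hM).2 (by rw [mul_comm]; exact hpY')
      have h3 := Real.log_le_log (by positivity) h2
      rw [Real.log_pow] at h3
      calc markovFD π P (m*(ℓ+1)) x * ((Mset u v x).card : ℝ) * Real.log (1+ρ)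
          = markovFD π P (m*(ℓ+1)) x * (((Mset u v x).card : ℝ) * Real.log (1+ρ)) := by
            ring
        _ ≤ markovFD π P (m*(ℓ+1)) x * Real.log
              ((∑ x' : Fin (m*(ℓ+1)) → α, coarseJointMC π P g (m*(ℓ+1)) x' (fun i => g (x i)))
                / markovFD π P (m*(ℓ+1)) x) :=
            mul_le_mul_of_nonneg_left h3 hM.le
  calc (m:ℝ) * ((markovFD π P (ℓ+1) u + markovFD π P (ℓ+1) v) * Real.log (1+ρ))
      = (∑ x : Fin (m*(ℓ+1)) → α,
          markovFD π P (m*(ℓ+1)) x * ((Mset u v x).card : ℝ)) * Real.log (1+ρ) := by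
        rw [count_sum π P u v hπ0 hP0 hP1 hinv huv]
        ring
    _ = ∑ x : Fin (m*(ℓ+1)) → α,
          markovFD π P (m*(ℓ+1)) x * ((Mset u v x).card : ℝ) * Real.log (1+ρ) := by
        rw [Finset.sum_mul]
    _ ≤ ∑ x : Fin (m*(ℓ+1)) → α,
          -∑ y : Fin (m*(ℓ+1)) → γ, coarseJointMC π P g (m*(ℓ+1)) x y
            * Real.log (coarseJointMC π P g (m*(ℓ+1)) x y
              / ∑ x' : Fin (m*(ℓ+1)) → α, coarseJointMC π P g (m*(ℓ+1)) x' y) :=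
        Finset.sum_le_sum fun x _ => hstep x
    _ = condEnt2 (coarseJointMC π P g (m*(ℓ+1))) := by
        rw [condEnt2, Finset.sum_neg_distrib]

end coarse
theorem zero_loss_aux
    {α γ : Type*} [Fintype α] [DecidableEq α] [Fintype γ]
    (P : Matrix α α ℝ) (hP0 : ∀ i j, 0 ≤ P i j) (hP1 : ∀ i, ∑ j, P i j = 1)
    (π : α → ℝ) (hπ0 : ∀ i, 0 ≤ π i) (hπ1 : ∑ i, π i = 1)
    (hinv : ∀ j, ∑ i, π i * P i j = π j)
    (g : α → γ) :
    Filter.Tendsto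
        (fun T : ℕ => condEnt2 (coarseJointMC π (fun a b => P a b) g T) / T)
        Filter.atTop (nhds 0)
      ↔ ∃ C : ℕ, ∀ T : ℕ, ∀ y : Fin T → γ,
          0 < (∑ x : Fin T → α,
            if ∀ t, g (x t) = y t then markovFD π (fun a b => P a b) T x else 0) →
          (Finset.univ.filter fun x : Fin T → α =>
            0 < markovFD π (fun a b => P a b) T x ∧ ∀ t, g (x t) = y t).card ≤ C := by
  set Pf : α → α → ℝ := fun a b => P a b with hPf
  constructor
  · intro htend
    by_contra hno
    push_neg at hno
    obtain ⟨T, y, hpos, hcard⟩ := hno (Fintype.card α * Fintype.card α + 1)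
    have hT1 : 1 ≤ T := by
      by_contra hT
      push_neg at hT
      have hT0 : T = 0 := Nat.lt_one_iff.mp hT
      subst hT0
      have h1 : (Finset.univ.filter fun x : Fin 0 → α =>
          0 < markovFD π Pf 0 x ∧ ∀ t, g (x t) = y t).card ≤ Fintype.card (Fin 0 → α) := by
        calc _ ≤ (Finset.univ : Finset (Fin 0 → α)).card := Finset.card_filter_le _ _
          _ = Fintype.card (Fin 0 → α) := Finset.card_univ
      have h2 : Fintype.card (Fin 0 → α) = 1 := by simp
      have h3 : Fintype.card α * Fintype.card α + 1 < 1 :=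
        lt_of_lt_of_le hcard (h1.trans h2.le)
      exact absurd (Nat.lt_of_succ_lt_succ h3) (Nat.not_lt_zero _)
    obtain ⟨ℓ, rfl⟩ : ∃ ℓ, T = ℓ + 1 := ⟨T - 1, (Nat.succ_pred_eq_of_pos hT1).symm⟩
    have hpig := Finset.exists_ne_map_eq_of_card_lt_of_maps_to
      (s := Finset.univ.filter fun x : Fin (ℓ+1) → α =>
        0 < markovFD π Pf (ℓ+1) x ∧ ∀ t, g (x t) = y t)
      (t := (Finset.univ : Finset (α × α)))
      (f := fun x => (x 0, x (Fin.last ℓ)))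
      (by
        have h4 : (Finset.univ : Finset (α × α)).card = Fintype.card α * Fintype.card α := by
          rw [Finset.card_univ, Fintype.card_prod]
        rw [h4]
        exact lt_trans (Nat.lt_succ_self _) hcard)
      (fun x _ => Finset.mem_univ _)
    obtain ⟨u, hu, v, hv, huv, heq⟩ := hpig
    obtain ⟨hMu, hgu⟩ := (Finset.mem_filter.1 hu).2
    obtain ⟨hMv, hgv⟩ := (Finset.mem_filter.1 hv).2
    have h00 : u 0 = v 0 := (Prod.ext_iff.1 heq).1
    have hll : u (Fin.last ℓ) = v (Fin.last ℓ) := (Prod.ext_iff.1 heq).2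
    have hg' : ∀ t, g (u t) = g (v t) := fun t => (hgu t).trans (hgv t).symm
    have hWu : 0 < transProd Pf ℓ u := by
      rcases eq_or_lt_of_le (transProd_nonneg Pf hP0 ℓ u) with hw | hw
      · exfalso
        rw [markovFD_succ, ← hw, mul_zero] at hMu
        exact lt_irrefl 0 hMu
      · exact hw
    have hWv : 0 < transProd Pf ℓ v := by
      rcases eq_or_lt_of_le (transProd_nonneg Pf hP0 ℓ v) with hw | hw
      · exfalso
        rw [markovFD_succ, ← hw, mul_zero] at hMv
        exact lt_irrefl 0 hMv
      · exact hw
    set ρ := min (transProd Pf ℓ u / transProd Pf ℓ v) (transProd Pf ℓ v / transProd Pf ℓ u)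
      with hρ
    have hρ0 : 0 < ρ := lt_min (div_pos hWu hWv) (div_pos hWv hWu)
    set c := (markovFD π Pf (ℓ+1) u + markovFD π Pf (ℓ+1) v) * Real.log (1+ρ) with hc
    have hcpos : 0 < c :=
      mul_pos (add_pos hMu hMv) (Real.log_pos (by linarith))
    have hsub : Filter.Tendsto (fun m : ℕ => m * (ℓ+1)) Filter.atTop Filter.atTop :=
      Filter.tendsto_atTop_mono (fun m => Nat.le_mul_of_pos_right m (Nat.succ_pos ℓ))
        Filter.tendsto_id
    have htend2 := htend.comp hsub
    have hlb : ∀ᶠ m : ℕ in Filter.atTop,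
        c / ((ℓ:ℝ)+1) ≤ ((fun T : ℕ => condEnt2 (coarseJointMC π Pf g T) / T)
          ∘ (fun m : ℕ => m * (ℓ+1))) m := by
      refine Filter.eventually_atTop.2 ⟨1, fun m hm => ?_⟩
      show c / ((ℓ:ℝ)+1) ≤ condEnt2 (coarseJointMC π Pf g (m*(ℓ+1))) / ((m*(ℓ+1) : ℕ) : ℝ)
      have hH := H_lower (m := m) π Pf u v hπ0 hP0 g hg' h00 hll huv hWu hWv hP1 hinv
      have hm0 : (0:ℝ) < (m:ℝ) := by exact_mod_cast hm
      have hDpos : (0:ℝ) < ((m*(ℓ+1) : ℕ) : ℝ) := by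
        have : 0 < m*(ℓ+1) := Nat.mul_pos hm (Nat.succ_pos ℓ)
        exact_mod_cast this
      have hDcast : ((m*(ℓ+1) : ℕ) : ℝ) = (m:ℝ) * ((ℓ:ℝ)+1) := by push_cast; ring
      calc c / ((ℓ:ℝ)+1) = ((m:ℝ) * c) / ((m:ℝ) * ((ℓ:ℝ)+1)) :=
            (mul_div_mul_left _ _ hm0.ne').symm
        _ = ((m:ℝ) * c) / ((m*(ℓ+1) : ℕ) : ℝ) := by rw [hDcast]
        _ ≤ condEnt2 (coarseJointMC π Pf g (m*(ℓ+1))) / ((m*(ℓ+1) : ℕ) : ℝ) :=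
            (div_le_div_iff_of_pos_right hDpos).2 hH
    have hge := ge_of_tendsto htend2 hlb
    have : 0 < c / ((ℓ:ℝ)+1) := div_pos hcpos (by positivity)
    linarith
  · rintro ⟨C, hC⟩
    have hub : ∀ T : ℕ, condEnt2 (coarseJointMC π Pf g T) ≤ Real.log ((max C 1 : ℕ) : ℝ) := by
      intro T
      refine condEnt2_le_log _ (fun x yy => coarse_nonneg π Pf hπ0 hP0 g T x yy)
        (coarse_total π Pf hπ1 hP1 g T) C ?_
      intro b hb
      have hmarg : (∑ x : Fin T → α, if ∀ t, g (x t) = b t then markovFD π Pf T x else 0)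
          = ∑ x : Fin T → α, coarseJointMC π Pf g T x b :=
        Finset.sum_congr rfl fun x _ =>
          if_congr (forall_congr' fun t => eq_comm) rfl rfl
      have hpos' : 0 < ∑ x : Fin T → α,
          if ∀ t, g (x t) = b t then markovFD π Pf T x else 0 := by
        rw [hmarg]; exact hb
      have hseteq : (Finset.univ.filter fun x : Fin T → α => coarseJointMC π Pf g T x b ≠ 0)
          = (Finset.univ.filter fun x : Fin T → α =>
              0 < markovFD π Pf T x ∧ ∀ t, g (x t) = b t) := by
        ext x
        simp only [Finset.mem_filter, Finset.mem_univ, true_and]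
        constructor
        · intro h
          by_cases hcnd : ∀ i, b i = g (x i)
          · refine ⟨?_, fun t => (hcnd t).symm⟩
            have heval : coarseJointMC π Pf g T x b = markovFD π Pf T x := if_pos hcnd
            rw [heval] at h
            exact lt_of_le_of_ne (markovFD_nonneg π Pf hπ0 hP0 T x) (Ne.symm h)
          · exact absurd (if_neg hcnd) h
        · rintro ⟨hm, hcnd⟩
          have heval : coarseJointMC π Pf g T x b = markovFD π Pf T x :=
            if_pos (fun i => (hcnd i).symm)
          rw [heval]
          exact hm.ne'
      rw [hseteq]
      exact hC T b hpos'
    have h0 : ∀ T : ℕ, 0 ≤ condEnt2 (coarseJointMC π Pf g T) / (T:ℝ) := fun T =>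
      div_nonneg (condEnt2_nonneg _ (fun x yy => coarse_nonneg π Pf hπ0 hP0 g T x yy))
        (Nat.cast_nonneg T)
    refine squeeze_zero h0 ?_ (tendsto_const_div_atTop_nhds_zero_nat (Real.log ((max C 1 : ℕ):ℝ)))
    intro T
    rcases Nat.eq_zero_or_pos T with hT | hT
    · subst hT
      simp
    · have hTpos : (0:ℝ) < (T:ℝ) := by exact_mod_cast hT
      exact (div_le_div_iff_of_pos_right hTpos).2 (hub T)


/-- For a stationary irreducible aperiodic Markov chain `X` and a coarse
graining `Y_t = g(X_t)`, the information loss rate `lim_T H(X_1^T|Y_1^T)/T` is zero iff the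
number of realizable preimages `|R(Y_1^T)|` is almost surely uniformly bounded over `T`. -/
theorem zero_loss_rate_iff_bounded_preimages
    {α γ : Type*} [Fintype α] [DecidableEq α] [Fintype γ]
    (P : Matrix α α ℝ) (hP0 : ∀ i j, 0 ≤ P i j) (hP1 : ∀ i, ∑ j, P i j = 1)
    (hirr : MCIrreducible P) (hap : MCAperiodic P)
    (π : α → ℝ) (hπ0 : ∀ i, 0 ≤ π i) (hπ1 : ∑ i, π i = 1)
    (hinv : ∀ j, ∑ i, π i * P i j = π j)
    (g : α → γ) :
    Filter.Tendsto
        (fun T : ℕ => condEnt2 (coarseJointMC π (fun a b => P a b) g T) / T)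
        Filter.atTop (nhds 0)
      ↔ ∃ C : ℕ, ∀ T : ℕ, ∀ y : Fin T → γ,
          0 < (∑ x : Fin T → α,
            if ∀ t, g (x t) = y t then markovFD π (fun a b => P a b) T x else 0) →
          (Finset.univ.filter fun x : Fin T → α =>
            0 < markovFD π (fun a b => P a b) T x ∧ ∀ t, g (x t) = y t).card ≤ C :=
  zero_loss_aux P hP0 hP1 π hπ0 hπ1 hinv g
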